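/- Consider a sequence of fixed-design clustered linear models indexed by G, constants M, C > 0, and positive reals h_g such that tr((X_gᵀX_g/N_g)⁻¹) ≤ M and λ_max(Ω_g) ≤ C · h_g for all g ≤ G. Then E‖β̂_G − β‖² ≤ (M·C/G²) Σ_{g=1}^G h_g/N_g. In particular: under semi-strong dependence (h_g = h(N_g) with h(N)/N → 0) the estimator is L²-consistent at rate (1/G²)Σ h(N_g)/N_g, and under weak dependence (h_g ≡ 1, i.e. λ_max(Ω_g) ≤ C) one gets E‖β̂_G − β‖² ≤ (M·C/G²) Σ_{g=1}^G 1/N_g. -/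

import Mathlib

open MeasureTheory ProbabilityTheory Matrix

/-- Largest eigenvalue of a real symmetric matrix via the Rayleigh quotient. -/
noncomputable def lamMax {n : ℕ} (S : Matrix (Fin n) (Fin n) ℝ) : ℝ :=
  ⨆ v : {v : Fin n → ℝ // ∑ i, v i ^ 2 = 1}, v.1 ⬝ᵥ S.mulVec v.1

lemma quad_bddAbove {n : ℕ} (S : Matrix (Fin n) (Fin n) ℝ) :
    BddAbove (Set.range fun v : {v : Fin n → ℝ // ∑ i, v i ^ 2 = 1} => v.1 ⬝ᵥ S.mulVec v.1) := by
  refine ⟨∑ j, ∑ l, |S j l|, ?_⟩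
  rintro x ⟨v, rfl⟩
  have hv : ∀ j, |v.1 j| ≤ 1 := by
    intro j
    have h1 : v.1 j ^ 2 ≤ 1 := by
      have h2 := Finset.single_le_sum (f := fun j => v.1 j ^ 2)
        (fun i _ => sq_nonneg _) (Finset.mem_univ j)
      rw [v.2] at h2; exact h2
    nlinarith [abs_nonneg (v.1 j), sq_abs (v.1 j)]
  have : v.1 ⬝ᵥ S.mulVec v.1 = ∑ j, ∑ l, v.1 j * (S j l * v.1 l) := by
    simp [dotProduct, mulVec, Finset.mul_sum]
  simp only []
  rw [this]
  refine Finset.sum_le_sum fun j _ => Finset.sum_le_sum fun l _ => ?_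
  calc v.1 j * (S j l * v.1 l) ≤ |v.1 j * (S j l * v.1 l)| := le_abs_self _
    _ = |v.1 j| * (|S j l| * |v.1 l|) := by rw [abs_mul, abs_mul]
    _ ≤ 1 * (|S j l| * 1) := by
        exact mul_le_mul (hv j) (mul_le_mul_of_nonneg_left (hv l) (abs_nonneg _))
          (by positivity) zero_le_one
    _ = |S j l| := by ring

lemma rayleigh_le {n : ℕ} (S : Matrix (Fin n) (Fin n) ℝ) (w : Fin n → ℝ) :
    w ⬝ᵥ S.mulVec w ≤ lamMax S * ∑ j, w j ^ 2 := by
  set s := ∑ j, w j ^ 2 with hs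
  have hs0 : 0 ≤ s := Finset.sum_nonneg fun _ _ => sq_nonneg _
  rcases eq_or_lt_of_le hs0 with h0 | hpos
  · have hw : ∀ j, w j = 0 := by
      intro j
      have := (Finset.sum_eq_zero_iff_of_nonneg (fun i _ => sq_nonneg (w i))).mp h0.symm j
        (Finset.mem_univ j)
      exact pow_eq_zero_iff two_ne_zero |>.mp this
    have hw0 : w ⬝ᵥ S.mulVec w = 0 := by
      simp [dotProduct, hw]
    rw [hw0, ← h0, mul_zero]
  · set v : Fin n → ℝ := (Real.sqrt s)⁻¹ • w with hvdef
    have hsq : (Real.sqrt s)⁻¹ ^ 2 = s⁻¹ := by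
      rw [← Real.sqrt_inv]; exact Real.sq_sqrt (by positivity)
    have hv1 : ∑ i, v i ^ 2 = 1 := by
      simp only [hvdef, Pi.smul_apply, smul_eq_mul, mul_pow, ← Finset.mul_sum, hsq]
      rw [← hs, inv_mul_cancel₀ (ne_of_gt hpos)]
    have hquad : v ⬝ᵥ S.mulVec v = s⁻¹ * (w ⬝ᵥ S.mulVec w) := by
      simp only [hvdef]
      rw [smul_dotProduct, mulVec_smul, dotProduct_smul]
      simp only [smul_eq_mul]
      rw [← mul_assoc, ← sq, hsq]
    have hle : v ⬝ᵥ S.mulVec v ≤ lamMax S := by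
      have := le_ciSup (quad_bddAbove S) (⟨v, hv1⟩ : {v : Fin n → ℝ // ∑ i, v i ^ 2 = 1})
      exact this
    have := mul_le_mul_of_nonneg_left hle (le_of_lt hpos)
    rw [hquad, ← mul_assoc, mul_inv_cancel₀ (ne_of_gt hpos), one_mul] at this
    linarith [this]

/-- rate Corollary following the paper's Theorem 1:
semi-strong and weak dependence regimes.  Along a sequence of fixed-design
clustered linear models indexed by `G`, if `tr((X_gᵀX_g/N_g)⁻¹) ≤ M` and
`λ_max(Ω_g) ≤ C·h_g`, then `E‖β̂_G − β‖² ≤ (M·C/G²)·∑_g h_g/N_g` for every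
`G ≥ 1`.  In particular (weak dependence, `h_g ≡ 1`, i.e. `λ_max(Ω_g) ≤ C`) one
gets `E‖β̂_G − β‖² ≤ (M·C/G²)·∑_g 1/N_g`. -/
theorem stmt5 {Ωs : Type*} [MeasurableSpace Ωs] (μ : Measure Ωs) [IsProbabilityMeasure μ]
    (k : ℕ) (β : Fin k → ℝ)
    (N : (G : ℕ) → Fin G → ℕ) (hN : ∀ G g, 1 ≤ N G g)
    (X : (G : ℕ) → (g : Fin G) → Matrix (Fin (N G g)) (Fin k) ℝ)
    (hX : ∀ G g, IsUnit ((X G g)ᵀ * X G g).det)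
    (ε : (G : ℕ) → (g : Fin G) → Ωs → (Fin (N G g) → ℝ))
    (hmeas : ∀ G g, Measurable (ε G g))
    (hL2 : ∀ G g i, Integrable (fun ω => (ε G g ω i) ^ 2) μ)
    (hmean : ∀ G g i, ∫ ω, ε G g ω i ∂μ = 0)
    (hindep : ∀ G, iIndepFun (ε G) μ)
    (Ωm : (G : ℕ) → (g : Fin G) → Matrix (Fin (N G g)) (Fin (N G g)) ℝ)
    (hΩ : ∀ G g i j, Ωm G g i j = ∫ ω, ε G g ω i * ε G g ω j ∂μ)
    (M C : ℝ) (hM : 0 < M) (hC : 0 < C)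
    (h : (G : ℕ) → Fin G → ℝ) (hh : ∀ G g, 0 < h G g)
    (hTr : ∀ G g, Matrix.trace ((((N G g : ℝ))⁻¹ • ((X G g)ᵀ * X G g))⁻¹) ≤ M)
    (hEig : ∀ G g, lamMax (Ωm G g) ≤ C * h G g)
    (betaHat : (G : ℕ) → Ωs → (Fin k → ℝ))
    (hbetaHat : ∀ G ω, betaHat G ω =
      (G : ℝ)⁻¹ • ∑ g, (((X G g)ᵀ * X G g)⁻¹).mulVec
        ((X G g)ᵀ.mulVec ((X G g).mulVec β + ε G g ω))) :
    (∀ G : ℕ, 1 ≤ G →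
      ∫ ω, ∑ i, (betaHat G ω i - β i) ^ 2 ∂μ ≤
        M * C / (G : ℝ) ^ 2 * ∑ g, h G g / (N G g : ℝ)) ∧
    ((∀ G g, h G g = 1) → ∀ G : ℕ, 1 ≤ G →
      ∫ ω, ∑ i, (betaHat G ω i - β i) ^ 2 ∂μ ≤
        M * C / (G : ℝ) ^ 2 * ∑ g, ((N G g : ℝ))⁻¹) := by
  have key : ∀ G : ℕ, 1 ≤ G →
      ∫ ω, ∑ i, (betaHat G ω i - β i) ^ 2 ∂μ ≤
        M * C / (G : ℝ) ^ 2 * ∑ g, h G g / (N G g : ℝ) := by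
    intro G hG
    have hGpos : (0 : ℝ) < (G : ℝ) := by exact_mod_cast hG
    set A : (g : Fin G) → Matrix (Fin k) (Fin (N G g)) ℝ :=
      fun g => ((X G g)ᵀ * X G g)⁻¹ * (X G g)ᵀ with hA
    set e : Fin G → Fin k → Ωs → ℝ :=
      fun g i ω => ∑ j, A g i j * ε G g ω j with he
    -- pointwise decomposition
    have hdiff : ∀ ω i, betaHat G ω i - β i = (G : ℝ)⁻¹ * ∑ g, e g i ω := by
      intro ω i
      have hterm : ∀ g : Fin G,
          (((X G g)ᵀ * X G g)⁻¹).mulVec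
            ((X G g)ᵀ.mulVec ((X G g).mulVec β + ε G g ω)) =
          β + (A g).mulVec (ε G g ω) := by
        intro g
        rw [mulVec_add, mulVec_mulVec, mulVec_add, mulVec_mulVec, mulVec_mulVec,
          Matrix.nonsing_inv_mul _ (hX G g), Matrix.one_mulVec, hA]
      have hbh : betaHat G ω i = (G : ℝ)⁻¹ * ((G : ℝ) * β i + ∑ g, (A g).mulVec (ε G g ω) i) := by
        rw [hbetaHat G ω]
        simp only [Pi.smul_apply, smul_eq_mul]
        congr 1
        rw [show (∑ g, (((X G g)ᵀ * X G g)⁻¹).mulVec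
            ((X G g)ᵀ.mulVec ((X G g).mulVec β + ε G g ω))) =
          ∑ g : Fin G, (β + (A g).mulVec (ε G g ω)) from Finset.sum_congr rfl fun g _ => hterm g]
        rw [Finset.sum_add_distrib]
        simp [Finset.sum_apply, mul_comm]
      rw [hbh]
      have hmv : ∀ g : Fin G, (A g).mulVec (ε G g ω) i = e g i ω := by
        intro g; simp [he, mulVec, dotProduct]
      rw [Finset.sum_congr rfl fun g _ => hmv g, mul_add, ← mul_assoc,
        inv_mul_cancel₀ (ne_of_gt hGpos), one_mul, add_sub_cancel_left]
    -- integrability of coordinates and products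
    have hmeasc : ∀ (g : Fin G) (j : Fin (N G g)), Measurable (fun ω => ε G g ω j) :=
      fun g j => (measurable_pi_apply j).comp (hmeas G g)
    have hint1 : ∀ (g : Fin G) (j : Fin (N G g)), Integrable (fun ω => ε G g ω j) μ := by
      intro g j
      have h2 : MemLp (fun ω => ε G g ω j) 2 μ :=
        (memLp_two_iff_integrable_sq (hmeasc g j).aestronglyMeasurable).mpr (hL2 G g j)
      exact h2.integrable one_le_two
    have hintprod : ∀ (g g' : Fin G) (j : Fin (N G g)) (l : Fin (N G g')),
        Integrable (fun ω => ε G g ω j * ε G g' ω l) μ := by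
      intro g g' j l
      by_cases hgg : g = g'
      · subst hgg
        refine Integrable.mono' ((hL2 G g j).add (hL2 G g l))
          ((hmeasc g j).mul (hmeasc g l)).aestronglyMeasurable ?_
        filter_upwards with ω
        simp only [Pi.add_apply]
        rw [Real.norm_eq_abs, abs_mul]
        rcases abs_cases (ε G g ω j) with ⟨hj, _⟩ | ⟨hj, _⟩ <;>
          rcases abs_cases (ε G g ω l) with ⟨hl, _⟩ | ⟨hl, _⟩ <;> nlinarith [sq_nonneg (ε G g ω j - ε G g ω l), sq_nonneg (ε G g ω j + ε G g ω l)]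
      · exact IndepFun.integrable_mul
          (((hindep G).indepFun hgg).comp (measurable_pi_apply j) (measurable_pi_apply l))
          (hint1 g j) (hint1 g' l)
    have hcross : ∀ (g g' : Fin G), g ≠ g' → ∀ (j : Fin (N G g)) (l : Fin (N G g')),
        ∫ ω, ε G g ω j * ε G g' ω l ∂μ = 0 := by
      intro g g' hgg j l
      have hind : IndepFun (fun ω => ε G g ω j) (fun ω => ε G g' ω l) μ :=
        ((hindep G).indepFun hgg).comp (measurable_pi_apply j) (measurable_pi_apply l)
      have hmm := hind.integral_mul_eq_mul_integral (hmeasc g j).aestronglyMeasurable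
        (hmeasc g' l).aestronglyMeasurable
      calc ∫ ω, ε G g ω j * ε G g' ω l ∂μ
          = ∫ ω, ((fun ω => ε G g ω j) * fun ω => ε G g' ω l) ω ∂μ := rfl
        _ = (∫ ω, ε G g ω j ∂μ) * ∫ ω, ε G g' ω l ∂μ := hmm
        _ = 0 := by rw [hmean G g j, zero_mul]
    -- products of e's
    have hee : ∀ (g g' : Fin G) (i : Fin k) (ω : Ωs),
        e g i ω * e g' i ω = ∑ j, ∑ l, (A g i j * A g' i l) * (ε G g ω j * ε G g' ω l) := by
      intro g g' i ω
      rw [he]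
      rw [Finset.sum_mul_sum]
      exact Finset.sum_congr rfl fun j _ => Finset.sum_congr rfl fun l _ => by ring
    have hInt_e : ∀ (g g' : Fin G) (i : Fin k),
        Integrable (fun ω => e g i ω * e g' i ω) μ := by
      intro g g' i
      rw [show (fun ω => e g i ω * e g' i ω) =
          fun ω => ∑ j, ∑ l, (A g i j * A g' i l) * (ε G g ω j * ε G g' ω l) from
        funext fun ω => hee g g' i ω]
      exact integrable_finset_sum _ fun j _ =>
        integrable_finset_sum _ fun l _ => (hintprod g g' j l).const_mul _
    have hI_diag : ∀ (g : Fin G) (i : Fin k),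
        ∫ ω, e g i ω * e g i ω ∂μ = ∑ j, ∑ l, A g i j * A g i l * Ωm G g j l := by
      intro g i
      rw [show (fun ω => e g i ω * e g i ω) =
          fun ω => ∑ j, ∑ l, (A g i j * A g i l) * (ε G g ω j * ε G g ω l) from
        funext fun ω => hee g g i ω]
      rw [integral_finset_sum _ fun j _ =>
        integrable_finset_sum _ fun l _ => (hintprod g g j l).const_mul _]
      refine Finset.sum_congr rfl fun j _ => ?_
      rw [integral_finset_sum _ fun l _ => (hintprod g g j l).const_mul _]
      refine Finset.sum_congr rfl fun l _ => ?_
      rw [integral_const_mul, hΩ G g j l]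
    have hI_off : ∀ (g g' : Fin G), g ≠ g' → ∀ i : Fin k,
        ∫ ω, e g i ω * e g' i ω ∂μ = 0 := by
      intro g g' hgg i
      rw [show (fun ω => e g i ω * e g' i ω) =
          fun ω => ∑ j, ∑ l, (A g i j * A g' i l) * (ε G g ω j * ε G g' ω l) from
        funext fun ω => hee g g' i ω]
      rw [integral_finset_sum _ fun j _ =>
        integrable_finset_sum _ fun l _ => (hintprod g g' j l).const_mul _]
      refine Finset.sum_eq_zero fun j _ => ?_
      rw [integral_finset_sum _ fun l _ => (hintprod g g' j l).const_mul _]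
      refine Finset.sum_eq_zero fun l _ => ?_
      rw [integral_const_mul, hcross g g' hgg j l, mul_zero]
    -- compute the integral
    set c : ℝ := (G : ℝ)⁻¹ * (G : ℝ)⁻¹ with hc
    have hrw : (fun ω => ∑ i, (betaHat G ω i - β i) ^ 2) =
        fun ω => ∑ i : Fin k, ∑ g : Fin G, ∑ g' : Fin G,
          c * (e g i ω * e g' i ω) := by
      funext ω
      refine Finset.sum_congr rfl fun i _ => ?_
      rw [hdiff ω i, mul_pow, pow_two ((G : ℝ)⁻¹), pow_two (∑ g, e g i ω), Finset.sum_mul_sum]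
      rw [Finset.mul_sum]
      refine Finset.sum_congr rfl fun g _ => ?_
      rw [Finset.mul_sum]
    have hIi : ∀ i : Fin k,
        ∫ ω, ∑ g : Fin G, ∑ g', c * (e g i ω * e g' i ω) ∂μ =
        ∑ g : Fin G, c * (∑ j, ∑ l, A g i j * A g i l * Ωm G g j l) := by
      intro i
      rw [integral_finset_sum _ fun g _ =>
        integrable_finset_sum _ fun g' _ => (hInt_e g g' i).const_mul _]
      refine Finset.sum_congr rfl fun g _ => ?_
      rw [integral_finset_sum _ fun g' _ => (hInt_e g g' i).const_mul _]
      rw [Finset.sum_eq_single g]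
      · rw [integral_const_mul, hI_diag g i]
      · intro g' _ hne
        rw [integral_const_mul, hI_off g g' (Ne.symm hne) i, mul_zero]
      · intro habs; exact absurd (Finset.mem_univ g) habs
    have hval : ∫ ω, ∑ i, (betaHat G ω i - β i) ^ 2 ∂μ =
        ∑ g : Fin G, ∑ i : Fin k,
          c * (∑ j, ∑ l, A g i j * A g i l * Ωm G g j l) := by
      rw [hrw]
      rw [integral_finset_sum _ fun i _ => integrable_finset_sum _ fun g _ =>
        integrable_finset_sum _ fun g' _ => (hInt_e g g' i).const_mul _]
      rw [Finset.sum_congr rfl fun i _ => hIi i, Finset.sum_comm]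
    -- per-cluster bound
    have hQ : ∀ g : Fin G, (∑ i : Fin k, ∑ j, ∑ l, A g i j * A g i l * Ωm G g j l) ≤
        C * h G g * (M / (N G g : ℝ)) := by
      intro g
      have hNpos : (0 : ℝ) < (N G g : ℝ) := by exact_mod_cast hN G g
      have hS : ((X G g)ᵀ * X G g)ᵀ = (X G g)ᵀ * X G g := by
        rw [transpose_mul, transpose_transpose]
      have hAAT : A g * (A g)ᵀ = ((X G g)ᵀ * X G g)⁻¹ := by
        have h1 : A g * (A g)ᵀ =
            ((X G g)ᵀ * X G g)⁻¹ * (((X G g)ᵀ * X G g) * ((X G g)ᵀ * X G g)⁻¹) := by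
          rw [hA]
          simp only [transpose_mul, transpose_transpose, transpose_nonsing_inv, hS]
          simp only [Matrix.mul_assoc]
        rw [h1, Matrix.mul_nonsing_inv _ (hX G g), Matrix.mul_one]
      have htr1 : ∑ i : Fin k, ∑ j, (A g i j) ^ 2 =
          Matrix.trace (((X G g)ᵀ * X G g)⁻¹) := by
        rw [← hAAT, Matrix.trace]
        simp [Matrix.diag, Matrix.mul_apply, sq, Matrix.transpose_apply]
      have htr2 : Matrix.trace (((X G g)ᵀ * X G g)⁻¹) ≤ M / (N G g : ℝ) := by
        have h1 := hTr G g
        have hinv : (((N G g : ℝ))⁻¹ • ((X G g)ᵀ * X G g))⁻¹ =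
            (N G g : ℝ) • ((X G g)ᵀ * X G g)⁻¹ := by
          haveI : Invertible (((N G g : ℝ))⁻¹) := invertibleOfNonzero (inv_ne_zero hNpos.ne')
          rw [Matrix.inv_smul (A := (X G g)ᵀ * X G g) (((N G g : ℝ))⁻¹) (hX G g)]
          congr 1
          rw [invOf_eq_inv, inv_inv]
        rw [hinv, Matrix.trace_smul, smul_eq_mul] at h1
        rw [le_div_iff₀ hNpos]
        linarith
      have hrow : ∀ i : Fin k, (∑ j, ∑ l, A g i j * A g i l * Ωm G g j l) ≤
          lamMax (Ωm G g) * ∑ j, (A g i j) ^ 2 := by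
        intro i
        have hray := rayleigh_le (Ωm G g) (fun j => A g i j)
        have hdp : (fun j => A g i j) ⬝ᵥ (Ωm G g).mulVec (fun j => A g i j) =
            ∑ j, ∑ l, A g i j * A g i l * Ωm G g j l := by
          simp only [dotProduct, mulVec, Finset.mul_sum]
          exact Finset.sum_congr rfl fun j _ => Finset.sum_congr rfl fun l _ => by ring
        rw [hdp] at hray
        exact hray
      have hsumsq : (0 : ℝ) ≤ ∑ i : Fin k, ∑ j, (A g i j) ^ 2 :=
        Finset.sum_nonneg fun i _ => Finset.sum_nonneg fun j _ => sq_nonneg _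
      calc (∑ i : Fin k, ∑ j, ∑ l, A g i j * A g i l * Ωm G g j l)
          ≤ ∑ i : Fin k, lamMax (Ωm G g) * ∑ j, (A g i j) ^ 2 :=
            Finset.sum_le_sum fun i _ => hrow i
        _ = lamMax (Ωm G g) * ∑ i : Fin k, ∑ j, (A g i j) ^ 2 := by rw [Finset.mul_sum]
        _ ≤ (C * h G g) * ∑ i : Fin k, ∑ j, (A g i j) ^ 2 :=
            mul_le_mul_of_nonneg_right (hEig G g) hsumsq
        _ = C * h G g * Matrix.trace (((X G g)ᵀ * X G g)⁻¹) := by rw [htr1]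
        _ ≤ C * h G g * (M / (N G g : ℝ)) := by
            exact mul_le_mul_of_nonneg_left htr2 (mul_nonneg hC.le (hh G g).le)
    -- finish
    rw [hval]
    have hfin : ∀ g : Fin G,
        (∑ i : Fin k, c * (∑ j, ∑ l, A g i j * A g i l * Ωm G g j l)) ≤
          M * C / (G : ℝ) ^ 2 * (h G g / (N G g : ℝ)) := by
      intro g
      have hNpos : (0 : ℝ) < (N G g : ℝ) := by exact_mod_cast hN G g
      have hcnn : (0 : ℝ) ≤ c := by rw [hc]; positivity
      have h1 : (∑ i : Fin k, c * (∑ j, ∑ l, A g i j * A g i l * Ωm G g j l)) =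
          c * ∑ i : Fin k, ∑ j, ∑ l, A g i j * A g i l * Ωm G g j l := by
        rw [Finset.mul_sum]
      rw [h1]
      calc c * ∑ i : Fin k, ∑ j, ∑ l, A g i j * A g i l * Ωm G g j l
          ≤ c * (C * h G g * (M / (N G g : ℝ))) := mul_le_mul_of_nonneg_left (hQ g) hcnn
        _ = M * C / (G : ℝ) ^ 2 * (h G g / (N G g : ℝ)) := by
            rw [hc]
            field_simp
    calc (∑ g : Fin G, ∑ i : Fin k, c * (∑ j, ∑ l, A g i j * A g i l * Ωm G g j l))
        ≤ ∑ g : Fin G, M * C / (G : ℝ) ^ 2 * (h G g / (N G g : ℝ)) :=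
          Finset.sum_le_sum fun g _ => hfin g
      _ = M * C / (G : ℝ) ^ 2 * ∑ g, h G g / (N G g : ℝ) := by rw [Finset.mul_sum]
  refine ⟨key, fun h1 G hG => ?_⟩
  have heq : (∑ g, h G g / (N G g : ℝ)) = ∑ g, ((N G g : ℝ))⁻¹ :=
    Finset.sum_congr rfl fun g _ => by rw [h1 G g, one_div]
  rw [← heq]
  exact key G hG
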